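/- For N = pq with p, q distinct primes and α a unit mod N, the number of cycles in the graph G_{N,α} (vertices 1,…,N−1, edges i→αi mod N) equals (q−1)/|orb(p)| + (p−1)/|orb(q)| + (p−1)(q−1)/lcm(|orb(p)|,|orb(q)|), where orb(x) denotes the orbit of x in Z/NZ under multiplication by α. -/

import Mathlib

set_option linter.unusedSectionVars false

lemma orbit_count_mul' {M : Type*} [Fintype M] (f : M → Set M)
    (hmem : ∀ x, x ∈ f x) (heq : ∀ x y, y ∈ f x → f y = f x)
    (X : Set M) (hXinv : ∀ x ∈ X, f x ⊆ X) (d : ℕ)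
    (hd : ∀ x ∈ X, (f x).ncard = d) :
    (f '' X).ncard * d = X.ncard := by
  classical
  have hXf : X.Finite := X.toFinite
  have hTf : (f '' X).Finite := (f '' X).toFinite
  have key : hXf.toFinset.card
      = ∑ S ∈ hTf.toFinset, (hXf.toFinset.filter (fun x => f x = S)).card := by
    apply Finset.card_eq_sum_card_fiberwise
    intro x hx
    simp only [Finset.mem_coe, Set.Finite.mem_toFinset] at hx ⊢
    exact Set.mem_image_of_mem f hx
  have hfib : ∀ S ∈ hTf.toFinset, (hXf.toFinset.filter (fun x => f x = S)).card = d := by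
    intro S hS
    simp only [Set.Finite.mem_toFinset, Set.mem_image] at hS
    obtain ⟨x₀, hx₀, rfl⟩ := hS
    have hset : ((hXf.toFinset.filter (fun x => f x = f x₀)) : Set M) = f x₀ := by
      ext x
      simp only [Finset.coe_filter, Set.mem_setOf_eq, Set.Finite.mem_toFinset]
      constructor
      · rintro ⟨-, hfx⟩; rw [← hfx]; exact hmem x
      · intro hx
        exact ⟨hXinv x₀ hx₀ hx, heq x₀ x hx⟩
    have h2 := congrArg Set.ncard hset
    rwa [Set.ncard_coe_finset, hd x₀ hx₀] at h2
  rw [Finset.sum_congr rfl hfib, Finset.sum_const, smul_eq_mul] at key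
  rw [← Set.ncard_eq_toFinset_card _ hXf, ← Set.ncard_eq_toFinset_card _ hTf] at key
  exact key.symm

section ZModOrbit
variable {N : ℕ} [NeZero N] (α : (ZMod N)ˣ)

def orb' (x : ZMod N) : Set (ZMod N) := {y | ∃ k : ℕ, (α : ZMod N) ^ k * x = y}

lemma mem_orb_self' (x : ZMod N) : x ∈ orb' α x := ⟨0, by simp⟩

lemma orb_exists_inv' (k : ℕ) :
    ∃ m : ℕ, ∀ z : ZMod N, (α : ZMod N) ^ m * ((α : ZMod N) ^ k * z) = z := by
  have hn : 0 < orderOf α := orderOf_pos α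
  refine ⟨k * (orderOf α - 1), fun z => ?_⟩
  have hadd : k * (orderOf α - 1) + k = k * orderOf α := by
    obtain ⟨n, h⟩ := Nat.exists_eq_succ_of_ne_zero hn.ne'
    rw [h]; simp [Nat.mul_succ]
  rw [← mul_assoc, ← pow_add, hadd]
  have h1 : (α : ZMod N) ^ (k * orderOf α) = 1 := by
    have h : α ^ (k * orderOf α) = 1 := by
      rw [mul_comm, pow_mul, pow_orderOf_eq_one, one_pow]
    calc (α : ZMod N) ^ (k * orderOf α) = ((α ^ (k * orderOf α) : (ZMod N)ˣ) : ZMod N) := by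
          rw [Units.val_pow_eq_pow_val]
      _ = 1 := by rw [h, Units.val_one]
  rw [h1, one_mul]

lemma orb_eq_of_mem' {x y : ZMod N} (h : y ∈ orb' α x) : orb' α y = orb' α x := by
  obtain ⟨k, rfl⟩ := h
  obtain ⟨m, hm⟩ := orb_exists_inv' α k
  ext z
  constructor
  · rintro ⟨j, rfl⟩
    exact ⟨j + k, by rw [pow_add, mul_assoc]⟩
  · rintro ⟨j, rfl⟩
    refine ⟨j + m, ?_⟩
    rw [pow_add, mul_assoc, hm x]

lemma orb_ncard' {x : ZMod N} {d : ℕ} (hd : 0 < d)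
    (hper : ∀ k : ℕ, (α : ZMod N) ^ k * x = x ↔ d ∣ k) :
    (orb' α x).ncard = d := by
  classical
  have himg : orb' α x = ↑((Finset.range d).image (fun k => (α : ZMod N) ^ k * x)) := by
    ext y
    simp only [Finset.coe_image, Finset.coe_range, Set.mem_image, Set.mem_Iio]
    constructor
    · rintro ⟨k, rfl⟩
      refine ⟨k % d, Nat.mod_lt _ hd, ?_⟩
      have hmod : (α : ZMod N) ^ (d * (k / d)) * x = x := (hper _).mpr ⟨_, rfl⟩
      calc (α : ZMod N) ^ (k % d) * x
          = (α : ZMod N) ^ (k % d) * ((α : ZMod N) ^ (d * (k / d)) * x) := by rw [hmod]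
        _ = (α : ZMod N) ^ (k % d + d * (k / d)) * x := by rw [pow_add, mul_assoc]
        _ = (α : ZMod N) ^ k * x := by rw [Nat.mod_add_div]
    · rintro ⟨k, -, rfl⟩; exact ⟨k, rfl⟩
  rw [himg, Set.ncard_coe_finset, Finset.card_image_of_injOn, Finset.card_range]
  have key : ∀ i j : ℕ, i ≤ j → j < d →
      (α : ZMod N) ^ i * x = (α : ZMod N) ^ j * x → i = j := by
    intro i j hij hjd he
    obtain ⟨m, hm⟩ := orb_exists_inv' α i
    have hji : (α : ZMod N) ^ j * x = (α : ZMod N) ^ (j - i) * ((α : ZMod N) ^ i * x) := by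
      rw [← mul_assoc, ← pow_add, Nat.sub_add_cancel hij]
    have h2 : (α : ZMod N) ^ (j - i) * x = x := by
      calc (α : ZMod N) ^ (j - i) * x
          = (α : ZMod N) ^ (j - i) * ((α : ZMod N) ^ m * ((α : ZMod N) ^ i * x)) := by rw [hm]
        _ = (α : ZMod N) ^ m * ((α : ZMod N) ^ (j - i) * ((α : ZMod N) ^ i * x)) := by ring
        _ = (α : ZMod N) ^ m * ((α : ZMod N) ^ j * x) := by rw [← hji]
        _ = (α : ZMod N) ^ m * ((α : ZMod N) ^ i * x) := by rw [he]
        _ = x := hm x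
    have hdvd : d ∣ j - i := (hper _).mp h2
    have := Nat.eq_zero_of_dvd_of_lt hdvd
    omega
  intro i hi j hj he
  simp only [Finset.coe_range, Set.mem_Iio] at hi hj
  rcases le_total i j with h | h
  · exact key i j h hj he
  · exact (key j i h hi he.symm).symm

end ZModOrbit


/-- For `N = p*q` with `p, q` distinct primes and `α` a unit mod `N`, the number of
cycles of the graph `G_{N,α}` (i.e. orbits of multiplication by `α` on the nonzero
residues) equals
`(q-1)/|orb(p)| + (p-1)/|orb(q)| + (p-1)(q-1)/lcm(|orb(p)|,|orb(q)|)`. -/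
theorem num_cycles_of_mul_graph (p q : ℕ) (hp : p.Prime) (hq : q.Prime) (hpq : p ≠ q)
    (α : (ZMod (p * q))ˣ) :
    Set.ncard {S : Set (ZMod (p * q)) | ∃ x : ZMod (p * q), x ≠ 0 ∧
        S = {y | ∃ k : ℕ, (α : ZMod (p * q)) ^ k * x = y}} =
      (q - 1) / Set.ncard {y : ZMod (p * q) | ∃ k : ℕ, (α : ZMod (p * q)) ^ k * (p : ZMod (p * q)) = y}
      + (p - 1) / Set.ncard {y : ZMod (p * q) | ∃ k : ℕ, (α : ZMod (p * q)) ^ k * (q : ZMod (p * q)) = y}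
      + (p - 1) * (q - 1) / Nat.lcm
          (Set.ncard {y : ZMod (p * q) | ∃ k : ℕ, (α : ZMod (p * q)) ^ k * (p : ZMod (p * q)) = y})
          (Set.ncard {y : ZMod (p * q) | ∃ k : ℕ, (α : ZMod (p * q)) ^ k * (q : ZMod (p * q)) = y}) := by
  haveI : Fact p.Prime := ⟨hp⟩
  haveI : Fact q.Prime := ⟨hq⟩
  haveI : NeZero p := ⟨hp.ne_zero⟩
  haveI : NeZero q := ⟨hq.ne_zero⟩
  haveI : NeZero (p * q) := ⟨Nat.mul_ne_zero hp.ne_zero hq.ne_zero⟩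
  set u : ZMod (p * q) := (α : ZMod (p * q)) with hu
  let φp : ZMod (p * q) →+* ZMod p := ZMod.castHom (dvd_mul_right p q) (ZMod p)
  let φq : ZMod (p * q) →+* ZMod q := ZMod.castHom (dvd_mul_left q p) (ZMod q)
  have hcop : Nat.Coprime p q := (Nat.coprime_primes hp hq).mpr hpq
  -- injectivity of the CRT map
  set Φ : ZMod (p * q) → ZMod p × ZMod q := fun x => (φp x, φq x) with hΦ
  have hinj : Function.Injective Φ := by
    intro x y hxy
    simp only [hΦ, Prod.mk.injEq] at hxy
    have h1 : φp (x - y) = 0 := by rw [map_sub, hxy.1, sub_self]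
    have h2 : φq (x - y) = 0 := by rw [map_sub, hxy.2, sub_self]
    have e1 : ((x - y).val : ZMod p) = 0 := by
      rwa [ZMod.natCast_val, ← ZMod.castHom_apply (h := dvd_mul_right p q)]
    have e2 : ((x - y).val : ZMod q) = 0 := by
      rwa [ZMod.natCast_val, ← ZMod.castHom_apply (h := dvd_mul_left q p)]
    have d1 : p ∣ (x - y).val := (ZMod.natCast_eq_zero_iff _ _).mp e1
    have d2 : q ∣ (x - y).val := (ZMod.natCast_eq_zero_iff _ _).mp e2
    have dpq : p * q ∣ (x - y).val := hcop.mul_dvd_of_dvd_of_dvd d1 d2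
    have hlt : (x - y).val < p * q := ZMod.val_lt _
    have hz : x - y = 0 := by
      have h0 : (x - y).val = 0 := Nat.eq_zero_of_dvd_of_lt dpq hlt
      rwa [ZMod.val_eq_zero] at h0
    exact sub_eq_zero.mp hz
  have hbij : Function.Bijective Φ := by
    rw [Fintype.bijective_iff_injective_and_card]
    refine ⟨hinj, ?_⟩
    simp [ZMod.card]
  -- componentwise units and their orders
  set αp : (ZMod p)ˣ := Units.map (φp : ZMod (p * q) →* ZMod p) α with hαpdef
  set αq : (ZMod q)ˣ := Units.map (φq : ZMod (p * q) →* ZMod q) α with hαqdef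
  set d1 := orderOf αq with hd1def   -- |orb(p)| = order of α mod q
  set d2 := orderOf αp with hd2def   -- |orb(q)| = order of α mod p
  have hd1 : 0 < d1 := orderOf_pos αq
  have hd2 : 0 < d2 := orderOf_pos αp
  have hvalp : φp u = (αp : ZMod p) := rfl
  have hvalq : φq u = (αq : ZMod q) := rfl
  have hαppow : ∀ k : ℕ, ((φp u) ^ k = 1 ↔ d2 ∣ k) := by
    intro k
    rw [hvalp, ← Units.val_pow_eq_pow_val]
    constructor
    · intro h
      exact orderOf_dvd_of_pow_eq_one (Units.ext (by simpa using h))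
    · intro h
      rw [orderOf_dvd_iff_pow_eq_one.mp h, Units.val_one]
  have hαqpow : ∀ k : ℕ, ((φq u) ^ k = 1 ↔ d1 ∣ k) := by
    intro k
    rw [hvalq, ← Units.val_pow_eq_pow_val]
    constructor
    · intro h
      exact orderOf_dvd_of_pow_eq_one (Units.ext (by simpa using h))
    · intro h
      rw [orderOf_dvd_iff_pow_eq_one.mp h, Units.val_one]
  -- equality test through components
  have hΦiff : ∀ y z : ZMod (p * q), y = z ↔ (φp y = φp z ∧ φq y = φq z) := by
    intro y z
    constructor
    · rintro rfl; exact ⟨rfl, rfl⟩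
    · rintro ⟨h1, h2⟩
      exact hinj (by simp only [hΦ, Prod.mk.injEq]; exact ⟨h1, h2⟩)
  -- componentwise period condition
  have hcompP : ∀ (x : ZMod (p * q)) (k : ℕ),
      (φp (u ^ k * x) = φp x ↔ (φp x = 0 ∨ d2 ∣ k)) := by
    intro x k
    rw [map_mul, map_pow]
    by_cases hx : φp x = 0
    · simp [hx]
    · simp only [hx, false_or]
      constructor
      · intro h
        exact (hαppow k).mp (mul_right_cancel₀ hx (by rw [h, one_mul]))
      · intro h
        rw [(hαppow k).mpr h, one_mul]
  have hcompQ : ∀ (x : ZMod (p * q)) (k : ℕ),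
      (φq (u ^ k * x) = φq x ↔ (φq x = 0 ∨ d1 ∣ k)) := by
    intro x k
    rw [map_mul, map_pow]
    by_cases hx : φq x = 0
    · simp [hx]
    · simp only [hx, false_or]
      constructor
      · intro h
        exact (hαqpow k).mp (mul_right_cancel₀ hx (by rw [h, one_mul]))
      · intro h
        rw [(hαqpow k).mpr h, one_mul]
  have hper : ∀ (x : ZMod (p * q)) (k : ℕ),
      (u ^ k * x = x ↔ ((φp x = 0 ∨ d2 ∣ k) ∧ (φq x = 0 ∨ d1 ∣ k))) := by
    intro x k
    rw [hΦiff (u ^ k * x) x, hcompP, hcompQ]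
  -- the three classes
  set A : Set (ZMod (p * q)) := {x | φp x = 0 ∧ φq x ≠ 0} with hA
  set B : Set (ZMod (p * q)) := {x | φp x ≠ 0 ∧ φq x = 0} with hB
  set C : Set (ZMod (p * q)) := {x | φp x ≠ 0 ∧ φq x ≠ 0} with hC
  -- orbit sizes on each class
  have hcardA : ∀ x ∈ A, (orb' α x).ncard = d1 := by
    intro x hx
    apply orb_ncard' α hd1
    intro k
    rw [hper x k]
    simp [hx.1, hx.2]
  have hcardB : ∀ x ∈ B, (orb' α x).ncard = d2 := by
    intro x hx
    apply orb_ncard' α hd2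
    intro k
    rw [hper x k]
    simp [hx.1, hx.2]
  have hlcm : ∀ k : ℕ, (d2 ∣ k ∧ d1 ∣ k) ↔ Nat.lcm d1 d2 ∣ k := by
    intro k
    constructor
    · rintro ⟨h2, h1⟩; exact Nat.lcm_dvd h1 h2
    · intro h
      exact ⟨(Nat.dvd_lcm_right _ _).trans h, (Nat.dvd_lcm_left _ _).trans h⟩
  have hlcmpos : 0 < Nat.lcm d1 d2 := Nat.lcm_pos hd1 hd2
  have hcardC : ∀ x ∈ C, (orb' α x).ncard = Nat.lcm d1 d2 := by
    intro x hx
    apply orb_ncard' α hlcmpos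
    intro k
    rw [hper x k]
    simp only [hx.1, hx.2, false_or]
    exact hlcm k
  -- invariance of classes
  have hinvA : ∀ x ∈ A, orb' α x ⊆ A := by
    rintro x ⟨hx1, hx2⟩ y ⟨k, rfl⟩
    refine ⟨by rw [map_mul, map_pow, hx1, mul_zero], ?_⟩
    rw [map_mul, map_pow]
    intro h
    rcases mul_eq_zero.mp h with h | h
    · exact pow_ne_zero k (hvalq ▸ αq.ne_zero) h
    · exact hx2 h
  have hinvB : ∀ x ∈ B, orb' α x ⊆ B := by
    rintro x ⟨hx1, hx2⟩ y ⟨k, rfl⟩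
    refine ⟨?_, by rw [map_mul, map_pow, hx2, mul_zero]⟩
    rw [map_mul, map_pow]
    intro h
    rcases mul_eq_zero.mp h with h | h
    · exact pow_ne_zero k (hvalp ▸ αp.ne_zero) h
    · exact hx1 h
  have hinvC : ∀ x ∈ C, orb' α x ⊆ C := by
    rintro x ⟨hx1, hx2⟩ y ⟨k, rfl⟩
    constructor
    · rw [map_mul, map_pow]
      intro h
      rcases mul_eq_zero.mp h with h | h
      · exact pow_ne_zero k (hvalp ▸ αp.ne_zero) h
      · exact hx1 h
    · rw [map_mul, map_pow]
      intro h
      rcases mul_eq_zero.mp h with h | h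
      · exact pow_ne_zero k (hvalq ▸ αq.ne_zero) h
      · exact hx2 h
  -- class cardinalities
  have himgA : Φ '' A = {z : ZMod p × ZMod q | z.1 = 0 ∧ z.2 ≠ 0} := by
    ext z
    constructor
    · rintro ⟨x, hx, rfl⟩; exact hx
    · intro hz
      obtain ⟨x, rfl⟩ := hbij.2 z
      exact ⟨x, hz, rfl⟩
  have himgB : Φ '' B = {z : ZMod p × ZMod q | z.1 ≠ 0 ∧ z.2 = 0} := by
    ext z
    constructor
    · rintro ⟨x, hx, rfl⟩; exact hx
    · intro hz
      obtain ⟨x, rfl⟩ := hbij.2 z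
      exact ⟨x, hz, rfl⟩
  have himgC : Φ '' C = {z : ZMod p × ZMod q | z.1 ≠ 0 ∧ z.2 ≠ 0} := by
    ext z
    constructor
    · rintro ⟨x, hx, rfl⟩; exact hx
    · intro hz
      obtain ⟨x, rfl⟩ := hbij.2 z
      exact ⟨x, hz, rfl⟩
  have hcardq : Nat.card {b : ZMod q // b ≠ 0} = q - 1 := by
    rw [Nat.card_eq_fintype_card, Fintype.card_subtype_compl, ZMod.card,
      Fintype.card_subtype_eq]
  have hcardp : Nat.card {a : ZMod p // a ≠ 0} = p - 1 := by
    rw [Nat.card_eq_fintype_card, Fintype.card_subtype_compl, ZMod.card,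
      Fintype.card_subtype_eq]
  have hcA : A.ncard = q - 1 := by
    rw [← Set.ncard_image_of_injective A hinj, himgA, ← Nat.card_coe_set_eq]
    have e : {z : ZMod p × ZMod q | z.1 = 0 ∧ z.2 ≠ 0} ≃ {b : ZMod q // b ≠ 0} :=
      { toFun := fun z => ⟨z.1.2, z.2.2⟩
        invFun := fun b => ⟨(0, b.1), rfl, b.2⟩
        left_inv := by
          rintro ⟨⟨a, b⟩, h1, h2⟩
          have ha : a = 0 := h1
          subst ha
          rfl
        right_inv := fun b => rfl }
    rw [Nat.card_congr e, hcardq]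
  have hcB : B.ncard = p - 1 := by
    rw [← Set.ncard_image_of_injective B hinj, himgB, ← Nat.card_coe_set_eq]
    have e : {z : ZMod p × ZMod q | z.1 ≠ 0 ∧ z.2 = 0} ≃ {a : ZMod p // a ≠ 0} :=
      { toFun := fun z => ⟨z.1.1, z.2.1⟩
        invFun := fun a => ⟨(a.1, 0), a.2, rfl⟩
        left_inv := by
          rintro ⟨⟨a, b⟩, h1, h2⟩
          have hb : b = 0 := h2
          subst hb
          rfl
        right_inv := fun a => rfl }
    rw [Nat.card_congr e, hcardp]
  have hcC : C.ncard = (p - 1) * (q - 1) := by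
    rw [← Set.ncard_image_of_injective C hinj, himgC, ← Nat.card_coe_set_eq]
    have e : {z : ZMod p × ZMod q | z.1 ≠ 0 ∧ z.2 ≠ 0} ≃
        {a : ZMod p // a ≠ 0} × {b : ZMod q // b ≠ 0} :=
      { toFun := fun z => (⟨z.1.1, z.2.1⟩, ⟨z.1.2, z.2.2⟩)
        invFun := fun w => ⟨(w.1.1, w.2.1), w.1.2, w.2.2⟩
        left_inv := by rintro ⟨⟨a, b⟩, h1, h2⟩; rfl
        right_inv := fun w => rfl }
    rw [Nat.card_congr e, Nat.card_prod, hcardp, hcardq]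
  -- decomposition of nonzero elements
  have hsetdec : {x : ZMod (p * q) | x ≠ 0} = A ∪ B ∪ C := by
    ext x
    simp only [Set.mem_setOf_eq, Set.mem_union, hA, hB, hC]
    constructor
    · intro hx
      by_cases h1 : φp x = 0 <;> by_cases h2 : φq x = 0
      · exact absurd ((hΦiff x 0).mpr (by simp [h1, h2])) hx
      · exact Or.inl (Or.inl ⟨h1, h2⟩)
      · exact Or.inl (Or.inr ⟨h1, h2⟩)
      · exact Or.inr ⟨h1, h2⟩
    · rintro ((⟨h1, h2⟩ | ⟨h1, h2⟩) | ⟨h1, h2⟩) rfl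
      · exact h2 (map_zero φq)
      · exact h1 (map_zero φp)
      · exact h1 (map_zero φp)
  -- disjointness of orbit families
  have hdisj : ∀ X Y : Set (ZMod (p * q)), (∀ x ∈ X, orb' α x ⊆ X) → Disjoint X Y →
      Disjoint (orb' α '' X) (orb' α '' Y) := by
    intro X Y hXinv hXY
    rw [Set.disjoint_left]
    rintro S ⟨x, hx, rfl⟩ ⟨y, hy, hyx⟩
    have hyX : y ∈ X := hXinv x hx (hyx ▸ mem_orb_self' α y)
    exact Set.disjoint_left.mp hXY hyX hy
  have hAB : Disjoint A B := by
    rw [Set.disjoint_left]; rintro x ⟨h1, h2⟩ ⟨h3, h4⟩; exact h3 h1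
  have hAC : Disjoint A C := by
    rw [Set.disjoint_left]; rintro x ⟨h1, h2⟩ ⟨h3, h4⟩; exact h3 h1
  have hBC : Disjoint B C := by
    rw [Set.disjoint_left]; rintro x ⟨h1, h2⟩ ⟨h3, h4⟩; exact h4 h2
  -- orbit counts
  have heq' : ∀ x y : ZMod (p * q), y ∈ orb' α x → orb' α y = orb' α x :=
    fun x y h => orb_eq_of_mem' α h
  have hcntA : (orb' α '' A).ncard * d1 = q - 1 := by
    rw [orbit_count_mul' (orb' α) (mem_orb_self' α) heq' A hinvA d1 hcardA, hcA]
  have hcntB : (orb' α '' B).ncard * d2 = p - 1 := by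
    rw [orbit_count_mul' (orb' α) (mem_orb_self' α) heq' B hinvB d2 hcardB, hcB]
  have hcntC : (orb' α '' C).ncard * Nat.lcm d1 d2 = (p - 1) * (q - 1) := by
    rw [orbit_count_mul' (orb' α) (mem_orb_self' α) heq' C hinvC _ hcardC, hcC]
  -- orbits of p and q
  have hpA : (p : ZMod (p * q)) ∈ A := by
    constructor
    · show φp ((p : ℕ) : ZMod (p * q)) = 0
      rw [map_natCast, ZMod.natCast_self]
    · show φq ((p : ℕ) : ZMod (p * q)) ≠ 0
      rw [map_natCast]
      intro h
      exact hpq ((Nat.prime_dvd_prime_iff_eq hq hp).mp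
        ((ZMod.natCast_eq_zero_iff p q).mp h)).symm
  have hqB : (q : ZMod (p * q)) ∈ B := by
    constructor
    · show φp ((q : ℕ) : ZMod (p * q)) ≠ 0
      rw [map_natCast]
      intro h
      exact hpq ((Nat.prime_dvd_prime_iff_eq hp hq).mp
        ((ZMod.natCast_eq_zero_iff q p).mp h))
    · show φq ((q : ℕ) : ZMod (p * q)) = 0
      rw [map_natCast, ZMod.natCast_self]
  have horbp : (orb' α (p : ZMod (p * q))).ncard = d1 := hcardA _ hpA
  have horbq : (orb' α (q : ZMod (p * q))).ncard = d2 := hcardB _ hqB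
  -- rewrite the goal
  have hg1 : {y : ZMod (p * q) | ∃ k : ℕ, (α : ZMod (p * q)) ^ k * (p : ZMod (p * q)) = y}
      = orb' α (p : ZMod (p * q)) := rfl
  have hg2 : {y : ZMod (p * q) | ∃ k : ℕ, (α : ZMod (p * q)) ^ k * (q : ZMod (p * q)) = y}
      = orb' α (q : ZMod (p * q)) := rfl
  have hg0 : {S : Set (ZMod (p * q)) | ∃ x : ZMod (p * q), x ≠ 0 ∧
      S = {y | ∃ k : ℕ, (α : ZMod (p * q)) ^ k * x = y}} = orb' α '' {x | x ≠ 0} := by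
    ext S
    simp only [Set.mem_setOf_eq, Set.mem_image]
    constructor
    · rintro ⟨x, h1, h2⟩; exact ⟨x, h1, h2.symm⟩
    · rintro ⟨x, h1, h2⟩; exact ⟨x, h1, h2.symm⟩
  rw [hg0, hg1, hg2, horbp, horbq, hsetdec, Set.image_union, Set.image_union,
    Set.ncard_union_eq (Disjoint.union_left (hdisj A C hinvA hAC) (hdisj B C hinvB hBC)),
    Set.ncard_union_eq (hdisj A B hinvA hAB)]
  rw [Nat.div_eq_of_eq_mul_left hd1 hcntA.symm, Nat.div_eq_of_eq_mul_left hd2 hcntB.symm,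
    Nat.div_eq_of_eq_mul_left hlcmpos hcntC.symm]
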